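/- The interpolated harmonic product ⋆ on H^1 is commutative: for all u, v in H^1, u ⋆ v = v ⋆ u. -/

import Mathlib

open Finsupp

/-- H¹ = R·1 + R⟨x,y⟩·y modeled as the free R-module on words z_{k₁}⋯z_{k_l},
i.e. on lists [k₁,…,k_l] of (positive) natural numbers; z_j = x^{j-1} y. -/
abbrev Hone (R : Type*) [CommRing R] := List ℕ →₀ R

/-- The circle product on words: z_i ∘ (z_j v) = (z_{i+j} + h·z_{i+j-1}) v,
zero unless the left factor has depth 1 and the right factor is a nonempty word. -/
noncomputable def circW (R : Type*) [CommRing R] (h : R) : List ℕ → List ℕ → Hone R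
  | [i], j :: v =>
      Finsupp.single ((i + j) :: v) 1 + Finsupp.single ((i + j - 1) :: v) h
  | _, _ => 0

/-- Bilinear extension of the circle product to H¹. -/
noncomputable def circ (R : Type*) [CommRing R] (h : R) (a w : Hone R) : Hone R :=
  a.sum fun u cu => w.sum fun v cv => (cu * cv) • circW R h u v

/-- S on words: S(1) = 1, S(z_k w) = z_k S(w) + t·(z_k ∘ S(w)). -/
noncomputable def SW (R : Type*) [CommRing R] (t h : R) : List ℕ → Hone R
  | [] => Finsupp.single [] 1
  | k :: w => (SW R t h w).sum fun u c =>
      c • (Finsupp.single (k :: u) (1 : R) + t • circW R h [k] u)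

/-- R-linear extension of S to H¹. -/
noncomputable def Smap (R : Type*) [CommRing R] (t h : R) (f : Hone R) : Hone R :=
  f.sum fun w c => c • SW R t h w

/-- z_j ∘ (−) as an operation on H¹. -/
noncomputable def circOne (R : Type*) [CommRing R] (h : R) (j : ℕ) (f : Hone R) : Hone R :=
  f.sum fun v c => c • circW R h [j] v

/-- The interpolated harmonic product ⋆ on words. -/
noncomputable def starW (R : Type*) [CommRing R] (t h : R) : List ℕ → List ℕ → Hone R
  | [], w => Finsupp.single w 1
  | i :: u, [] => Finsupp.single (i :: u) 1
  | i :: u, j :: v =>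
      Finsupp.mapDomain (List.cons i) (starW R t h u (j :: v)) +
      Finsupp.mapDomain (List.cons j) (starW R t h (i :: u) v) +
      (1 - 2 * t) • (Finsupp.mapDomain (List.cons (i + j)) (starW R t h u v) +
        h • Finsupp.mapDomain (List.cons (i + j - 1)) (starW R t h u v)) +
      (t ^ 2 - t) • circOne R h i (circOne R h j (starW R t h u v))
  termination_by u v => u.length + v.length
  decreasing_by all_goals (simp; try omega)

/-- Bilinear extension of ⋆ to H¹. -/
noncomputable def starP (R : Type*) [CommRing R] (t h : R) (f g : Hone R) : Hone R :=
  f.sum fun u cu => g.sum fun v cv => (cu * cv) • starW R t h u v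


section Aux
variable {R : Type*} [CommRing R] (h : R)

lemma circOne_single (j : ℕ) (v : List ℕ) (c : R) :
    circOne R h j (Finsupp.single v c) = c • circW R h [j] v := by
  rw [circOne, Finsupp.sum_single_index]; simp

lemma circOne_zero (j : ℕ) : circOne R h j 0 = 0 := by simp [circOne]

lemma circOne_add (j : ℕ) (f g : Hone R) :
    circOne R h j (f + g) = circOne R h j f + circOne R h j g :=
  Finsupp.sum_add_index' (by simp) (by intros; rw [add_smul])

lemma circOne_smul (j : ℕ) (r : R) (f : Hone R) :
    circOne R h j (r • f) = r • circOne R h j f := by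
  rw [circOne, circOne, Finsupp.sum_smul_index' (by simp), Finsupp.smul_sum]
  simp [mul_smul]

lemma circOne_circOne_single {i j : ℕ} (hi : 1 ≤ i) (hj : 1 ≤ j) (a : ℕ) (v : List ℕ) (c : R) :
    circOne R h i (circOne R h j (Finsupp.single (a :: v) c)) =
      c • (Finsupp.single ((i + j + a) :: v) (1 : R) +
        Finsupp.single ((i + j + a - 1) :: v) h +
        h • (Finsupp.single ((i + j + a - 1) :: v) (1 : R) +
          Finsupp.single ((i + j + a - 2) :: v) h)) := by
  rw [circOne_single]
  show circOne R h i (c • (Finsupp.single ((j + a) :: v) 1 + Finsupp.single ((j + a - 1) :: v) h)) = _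
  rw [circOne_smul, circOne_add, circOne_single, circOne_single]
  show c • ((1:R) • (Finsupp.single ((i + (j+a)) :: v) 1 + Finsupp.single ((i + (j+a) - 1) :: v) h)
      + h • (Finsupp.single ((i + (j+a-1)) :: v) 1 + Finsupp.single ((i + (j+a-1) - 1) :: v) h)) = _
  rw [one_smul]
  simp only [show i + (j+a) = i + j + a from by omega,
    show i + (j+a-1) = i + j + a - 1 from by omega,
    show i + j + a - 1 - 1 = i + j + a - 2 from by omega]

lemma circOne_comm {i j : ℕ} (hi : 1 ≤ i) (hj : 1 ≤ j) (f : Hone R) :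
    circOne R h i (circOne R h j f) = circOne R h j (circOne R h i f) := by
  induction f using Finsupp.induction with
  | zero => simp [circOne_zero]
  | single_add w c f _ _ ih =>
    rw [circOne_add, circOne_add, circOne_add, circOne_add, ih]
    congr 1
    cases w with
    | nil =>
      rw [circOne_single]
      show circOne R h i (c • (0 : Hone R)) = circOne R h j (circOne R h i (Finsupp.single [] c))
      rw [circOne_single]
      show _ = circOne R h j (c • (0 : Hone R))
      simp [circOne_zero]
    | cons a v =>
      rw [circOne_circOne_single h hi hj, circOne_circOne_single h hj hi,
        Nat.add_comm j i]

end Aux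

lemma starW_comm {R : Type*} [CommRing R] (h t : R) :
    ∀ (u v : List ℕ), (∀ k ∈ u, 1 ≤ k) → (∀ k ∈ v, 1 ≤ k) →
    starW R t h u v = starW R t h v u
  | [], [], _, _ => rfl
  | [], j::v, _, _ => by rw [starW, starW]
  | i::u, [], _, _ => by rw [starW, starW]
  | i::u, j::v, hu, hv => by
    have h1 := starW_comm h t u (j::v) (fun k hk => hu k (List.mem_cons_of_mem _ hk)) hv
    have h2 := starW_comm h t (i::u) v hu (fun k hk => hv k (List.mem_cons_of_mem _ hk))
    have h3 := starW_comm h t u v (fun k hk => hu k (List.mem_cons_of_mem _ hk))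
      (fun k hk => hv k (List.mem_cons_of_mem _ hk))
    rw [starW, starW, ← h1, ← h2, ← h3, Nat.add_comm j i,
      circOne_comm h (hu i List.mem_cons_self) (hv j List.mem_cons_self)]
    abel
  termination_by u v => u.length + v.length

theorem stmt_15 (R : Type*) [CommRing R] (t h : R) (f g : Hone R)
    (hf : ∀ u ∈ f.support, ∀ k ∈ u, 1 ≤ k)
    (hg : ∀ u ∈ g.support, ∀ k ∈ u, 1 ≤ k) :
    starP R t h f g = starP R t h g f := by
  rw [starP, starP, Finsupp.sum_comm]
  refine Finsupp.sum_congr fun v hv => Finsupp.sum_congr fun u hu => ?_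
  rw [mul_comm, starW_comm h t u v (hf u hu) (hg v hv)]
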